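/- A bipartite density matrix ρ_S on C_A ⊗ C_B is classically correlated (i.e., ρ_S = Σ_{k,j} p_{k,j} |a_k,b_j⟩⟨a_k,b_j| for orthonormal bases {|a_k⟩} of C_A and {|b_j⟩} of C_B) if and only if there exists a measurement interaction unitary U_{S:M} = U_{A:M_A} ⊗ U_{B:M_B} (each local factor acting as |k⟩|0⟩ ↦ |k⟩|k⟩ in some orthonormal basis) such that the post-interaction state U_{S:M}(ρ_S ⊗ |0⟩⟨0|_M)U_{S:M}† is separable with respect to the system : apparatus bipartition S : M. -/

import Mathlib

open scoped Matrix Kronecker ComplexOrder Classical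
open Filter

noncomputable section

namespace QI

/-! ### Basic objects: states, entropy, partial traces -/

/-- The outer product `|v⟩⟨v|` of a vector with itself. -/
def proj {n : Type*} (v : n → ℂ) : Matrix n n ℂ :=
  Matrix.of fun i j => v i * star (v j)

/-- The tensor product of two vectors. -/
def tensorVec {A B : Type*} (u : A → ℂ) (v : B → ℂ) : A × B → ℂ :=
  fun p => u p.1 * v p.2

/-- A unit (normalized) vector. -/
def UnitVec {n : Type*} [Fintype n] (v : n → ℂ) : Prop :=
  ∑ i, star (v i) * v i = 1

/-- A density matrix: positive semidefinite (hence Hermitian) with unit trace. -/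
def IsDensityMatrix {n : Type*} [Fintype n] (ρ : Matrix n n ℂ) : Prop :=
  ρ.PosSemidef ∧ ρ.trace = 1

/-- A pure state: a rank-one projector onto a unit vector. -/
def IsPure {n : Type*} [Fintype n] (ρ : Matrix n n ℂ) : Prop :=
  ∃ v : n → ℂ, UnitVec v ∧ ρ = proj v

/-- The von Neumann entropy (base 2), `S(ρ) = -Tr[ρ log₂ ρ] = -∑ λᵢ log₂ λᵢ`. -/
def entropy {n : Type*} [Fintype n] [DecidableEq n] (ρ : Matrix n n ℂ) : ℝ :=
  if h : ρ.IsHermitian then -∑ i, h.eigenvalues i * Real.logb 2 (h.eigenvalues i) else 0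

/-- The Shannon entropy of a probability distribution. -/
def shannonEntropy {X : Type*} [Fintype X] (p : X → ℝ) : ℝ :=
  -∑ x, p x * Real.logb 2 (p x)

/-- Partial trace over the second tensor factor. -/
def trB {A B : Type*} [Fintype A] [Fintype B] (ρ : Matrix (A × B) (A × B) ℂ) :
    Matrix A A ℂ :=
  Matrix.of fun a a' => ∑ b, ρ (a, b) (a', b)

/-- Partial trace over the first tensor factor. -/
def trA {A B : Type*} [Fintype A] [Fintype B] (ρ : Matrix (A × B) (A × B) ℂ) :
    Matrix B B ℂ :=
  Matrix.of fun b b' => ∑ a, ρ (a, b) (a, b')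

/-- For a tripartite state on `A × B × E`, the partial trace over the middle factor `B`. -/
def trB3 {A B E : Type*} [Fintype A] [Fintype B] [Fintype E]
    (ρ : Matrix (A × B × E) (A × B × E) ℂ) : Matrix (A × E) (A × E) ℂ :=
  Matrix.of fun p q => ∑ b, ρ (p.1, b, p.2) (q.1, b, q.2)

/-- For a tripartite state on `A × B × E`, the partial trace over the last factor `E`. -/
def trE3 {A B E : Type*} [Fintype A] [Fintype B] [Fintype E]
    (ρ : Matrix (A × B × E) (A × B × E) ℂ) : Matrix (A × B) (A × B) ℂ :=
  Matrix.of fun p q => ∑ e, ρ (p.1, p.2, e) (q.1, q.2, e)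

/-- Quantum mutual information `I(A:B) = S(ρ_A) + S(ρ_B) - S(ρ_AB)`. -/
def mutualInfo {A B : Type*} [Fintype A] [DecidableEq A] [Fintype B] [DecidableEq B]
    (ρ : Matrix (A × B) (A × B) ℂ) : ℝ :=
  entropy (trB ρ) + entropy (trA ρ) - entropy ρ

/-- Quantum conditional entropy `S(A|B) = S(ρ_AB) - S(ρ_B)`. -/
def condEnt {A B : Type*} [Fintype A] [DecidableEq A] [Fintype B] [DecidableEq B]
    (ρ : Matrix (A × B) (A × B) ℂ) : ℝ :=
  entropy ρ - entropy (trA ρ)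

/-- Coherent information `I(A⟩B) = -S(A|B) = S(ρ_B) - S(ρ_AB)`. -/
def cohInfo {A B : Type*} [Fintype A] [DecidableEq A] [Fintype B] [DecidableEq B]
    (ρ : Matrix (A × B) (A × B) ℂ) : ℝ :=
  entropy (trA ρ) - entropy ρ

/-! ### Measurements, classical correlations, discord -/

/-- Post-measurement state `∑ₓ Tr_B[(I ⊗ Mₓ)ρ] ⊗ |x⟩⟨x|` of a local POVM `{Mₓ}` on `B`. -/
def postMeas {A B : Type*} [Fintype A] [DecidableEq A] [Fintype B] [DecidableEq B] {m : ℕ}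
    (M : Fin m → Matrix B B ℂ) (ρ : Matrix (A × B) (A × B) ℂ) :
    Matrix (A × Fin m) (A × Fin m) ℂ :=
  Matrix.of fun p q =>
    if p.2 = q.2 then trB (((1 : Matrix A A ℂ) ⊗ₖ M p.2) * ρ) p.1 q.1 else 0

/-- Classical correlations `J(A:B) = sup` over local POVM measurements on `B` of the
mutual information of the post-measurement state. -/
def classicalCorr {A B : Type*} [Fintype A] [DecidableEq A] [Fintype B] [DecidableEq B]
    (ρ : Matrix (A × B) (A × B) ℂ) : ℝ :=
  sSup { r | ∃ (m : ℕ) (M : Fin m → Matrix B B ℂ),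
    (∀ x, (M x).PosSemidef) ∧ (∑ x, M x = 1) ∧ r = mutualInfo (postMeas M ρ) }

/-- Quantum discord `D(A:B) = I(A:B) - J(A:B)` (measurement on the second subsystem). -/
def discord {A B : Type*} [Fintype A] [DecidableEq A] [Fintype B] [DecidableEq B]
    (ρ : Matrix (A × B) (A × B) ℂ) : ℝ :=
  mutualInfo ρ - classicalCorr ρ

/-! ### Entanglement measures -/

/-- Entanglement of formation: the minimum average entanglement entropy over pure-state
ensembles realizing `ρ`. -/
def eof {A B : Type*} [Fintype A] [DecidableEq A] [Fintype B] [DecidableEq B]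
    (ρ : Matrix (A × B) (A × B) ℂ) : ℝ :=
  sInf { r | ∃ (m : ℕ) (p : Fin m → ℝ) (ψ : Fin m → (A × B → ℂ)),
    (∀ i, 0 ≤ p i) ∧ (∑ i, p i = 1) ∧ (∀ i, UnitVec (ψ i)) ∧
    ρ = ∑ i, (p i : ℂ) • proj (ψ i) ∧
    r = ∑ i, p i * entropy (trB (proj (ψ i))) }

/-- Separable states: convex combinations of product states. -/
def IsSeparable {A B : Type*} [Fintype A] [Fintype B]
    (ρ : Matrix (A × B) (A × B) ℂ) : Prop :=
  ∃ (m : ℕ) (p : Fin m → ℝ) (σA : Fin m → Matrix A A ℂ) (σB : Fin m → Matrix B B ℂ),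
    (∀ i, 0 ≤ p i) ∧ (∑ i, p i = 1) ∧ (∀ i, IsDensityMatrix (σA i)) ∧
    (∀ i, IsDensityMatrix (σB i)) ∧ ρ = ∑ i, (p i : ℂ) • (σA i ⊗ₖ σB i)

/-- The `k`-fold tensor power of a bipartite state, with tensor factors regrouped as
`(A^k) × (B^k)`. -/
def pow {A B : Type*} [Fintype A] [Fintype B] (ρ : Matrix (A × B) (A × B) ℂ) (k : ℕ) :
    Matrix ((Fin k → A) × (Fin k → B)) ((Fin k → A) × (Fin k → B)) ℂ :=
  Matrix.of fun p q => ∏ i, ρ (p.1 i, p.2 i) (q.1 i, q.2 i)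

/-- Regularization `lim_{k → ∞} f k / k`. -/
def regularize (f : ℕ → ℝ) : ℝ :=
  limUnder atTop fun k : ℕ => f k / k

/-- Entanglement cost: the regularized entanglement of formation. -/
def entCost {A B : Type*} [Fintype A] [DecidableEq A] [Fintype B] [DecidableEq B]
    (ρ : Matrix (A × B) (A × B) ℂ) : ℝ :=
  regularize fun k => eof (pow ρ k)

/-- Regularized quantum discord. -/
def regDiscord {A B : Type*} [Fintype A] [DecidableEq A] [Fintype B] [DecidableEq B]
    (ρ : Matrix (A × B) (A × B) ℂ) : ℝ :=
  regularize fun k => discord (pow ρ k)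

/-- An LOCC (modelled as separable-Kraus) quantum channel between bipartite systems:
all Kraus operators are of local product form. -/
def IsLOCCChannel {A B : Type*} [Fintype A] [DecidableEq A] [Fintype B] [DecidableEq B]
    {a b : ℕ} (Λ : Matrix (A × B) (A × B) ℂ → Matrix (Fin a × Fin b) (Fin a × Fin b) ℂ) :
    Prop :=
  ∃ (m : ℕ) (L : Fin m → Matrix (Fin a) A ℂ) (R : Fin m → Matrix (Fin b) B ℂ),
    (∑ k, (L k ⊗ₖ R k)ᴴ * (L k ⊗ₖ R k) = 1) ∧
    ∀ ρ, Λ ρ = ∑ k, (L k ⊗ₖ R k) * ρ * (L k ⊗ₖ R k)ᴴ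

/-- Distillable entanglement: the regularized coherent information optimized over LOCC
operations on the copies. -/
def distEnt {A B : Type*} [Fintype A] [DecidableEq A] [Fintype B] [DecidableEq B]
    (ρ : Matrix (A × B) (A × B) ℂ) : ℝ :=
  limUnder atTop fun k : ℕ =>
    (sSup { r | ∃ (a b : ℕ)
        (Λ : Matrix ((Fin k → A) × (Fin k → B)) ((Fin k → A) × (Fin k → B)) ℂ →
          Matrix (Fin a × Fin b) (Fin a × Fin b) ℂ),
        IsLOCCChannel Λ ∧ r = cohInfo (Λ (pow ρ k)) }) / k

/-! ### Orthonormal families, dephasings, relative entropy -/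

/-- A family of vectors is orthonormal. -/
def OrthonormalFam {ι n : Type*} [Fintype n] [DecidableEq ι] (v : ι → n → ℂ) : Prop :=
  ∀ i j, (∑ x, star (v i x) * v j x) = if i = j then (1 : ℂ) else 0

/-- The Hermitian functional calculus of `log₂` (with the convention `log₂ 0 = 0`),
used to define `Tr[ρ log₂ σ]`. -/
def hermLog {n : Type*} [Fintype n] [DecidableEq n] (M : Matrix n n ℂ) : Matrix n n ℂ :=
  if h : M.IsHermitian then
    (h.eigenvectorUnitary : Matrix n n ℂ) *
      Matrix.diagonal (fun i => (Real.logb 2 (h.eigenvalues i) : ℂ)) *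
      (star (h.eigenvectorUnitary : Matrix n n ℂ))
  else 0

/-- Quantum relative entropy `S(ρ‖σ) = Tr[ρ log₂ ρ - ρ log₂ σ]`. -/
def relEnt {n : Type*} [Fintype n] [DecidableEq n] (ρ σ : Matrix n n ℂ) : ℝ :=
  ((ρ * hermLog ρ - ρ * hermLog σ).trace).re

/-- Local dephasing of the second subsystem in the orthonormal basis `e`. -/
def dephB {A B : Type*} [Fintype A] [DecidableEq A] [Fintype B] [DecidableEq B]
    (e : B → B → ℂ) (ρ : Matrix (A × B) (A × B) ℂ) : Matrix (A × B) (A × B) ℂ :=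
  ∑ k, ((1 : Matrix A A ℂ) ⊗ₖ proj (e k)) * ρ * ((1 : Matrix A A ℂ) ⊗ₖ proj (e k))

/-- Local dephasing of both subsystems in the orthonormal bases `a` and `b`. -/
def dephAB {A B : Type*} [Fintype A] [DecidableEq A] [Fintype B] [DecidableEq B]
    (a : A → A → ℂ) (b : B → B → ℂ) (ρ : Matrix (A × B) (A × B) ℂ) :
    Matrix (A × B) (A × B) ℂ :=
  ∑ k, ∑ l, (proj (a k) ⊗ₖ proj (b l)) * ρ * (proj (a k) ⊗ₖ proj (b l))

/-- One-way work deficit: minimum entropy production over complete local dephasings of `B`. -/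
def oneWayDeficit {A B : Type*} [Fintype A] [DecidableEq A] [Fintype B] [DecidableEq B]
    (ρ : Matrix (A × B) (A × B) ℂ) : ℝ :=
  sInf { r | ∃ e : B → B → ℂ, OrthonormalFam e ∧ r = entropy (dephB e ρ) - entropy ρ }

/-- Zero-way work deficit: minimum entropy production over complete local dephasings of
both subsystems. -/
def zeroWayDeficit {A B : Type*} [Fintype A] [DecidableEq A] [Fintype B] [DecidableEq B]
    (ρ : Matrix (A × B) (A × B) ℂ) : ℝ :=
  sInf { r | ∃ (a : A → A → ℂ) (b : B → B → ℂ), OrthonormalFam a ∧ OrthonormalFam b ∧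
    r = entropy (dephAB a b ρ) - entropy ρ }

/-- Quantum-classical states `∑ₖ pₖ ρₖ ⊗ |eₖ⟩⟨eₖ|`. -/
def IsQCState {A B : Type*} [Fintype A] [Fintype B] [DecidableEq B]
    (σ : Matrix (A × B) (A × B) ℂ) : Prop :=
  ∃ (e : B → B → ℂ) (p : B → ℝ) (ρk : B → Matrix A A ℂ),
    OrthonormalFam e ∧ (∀ k, 0 ≤ p k) ∧ (∑ k, p k = 1) ∧
    (∀ k, IsDensityMatrix (ρk k)) ∧ σ = ∑ k, (p k : ℂ) • (ρk k ⊗ₖ proj (e k))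

/-- Classical-classical (strictly classically correlated) states
`∑ₖⱼ p_{kj} |aₖ⟩⟨aₖ| ⊗ |bⱼ⟩⟨bⱼ|`. -/
def IsCCState {A B : Type*} [Fintype A] [DecidableEq A] [Fintype B] [DecidableEq B]
    (ρ : Matrix (A × B) (A × B) ℂ) : Prop :=
  ∃ (a : A → A → ℂ) (b : B → B → ℂ) (p : A → B → ℝ),
    OrthonormalFam a ∧ OrthonormalFam b ∧ (∀ k j, 0 ≤ p k j) ∧
    (∑ k, ∑ j, p k j) = 1 ∧
    ρ = ∑ k, ∑ j, (p k j : ℂ) • proj (tensorVec (a k) (b j))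

/-- Relative entropy of quantumness w.r.t. quantum-classical states. -/
def relEntQuantumnessQC {A B : Type*} [Fintype A] [DecidableEq A] [Fintype B] [DecidableEq B]
    (ρ : Matrix (A × B) (A × B) ℂ) : ℝ :=
  sInf { r | ∃ σ : Matrix (A × B) (A × B) ℂ, IsQCState σ ∧ r = relEnt ρ σ }

/-- Relative entropy of quantumness w.r.t. classical-classical states. -/
def relEntQuantumnessCC {A B : Type*} [Fintype A] [DecidableEq A] [Fintype B] [DecidableEq B]
    (ρ : Matrix (A × B) (A × B) ℂ) : ℝ :=
  sInf { r | ∃ σ : Matrix (A × B) (A × B) ℂ, IsCCState σ ∧ r = relEnt ρ σ }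

/-- Relative entropy of entanglement: minimal relative entropy to a separable state. -/
def relEntEntanglement {A B : Type*} [Fintype A] [DecidableEq A] [Fintype B] [DecidableEq B]
    (ρ : Matrix (A × B) (A × B) ℂ) : ℝ :=
  sInf { r | ∃ σ : Matrix (A × B) (A × B) ℂ, IsSeparable σ ∧ r = relEnt ρ σ }

/-! ### The activation protocol -/

/-- The reference vector `|0⟩`. -/
def ket0 (a : ℕ) [NeZero a] : Fin a → ℂ := fun i => if i = 0 then 1 else 0

/-- The generalized CNOT (copy) gate `|k⟩|m⟩ ↦ |k⟩|m + k⟩` on `Fin a × Fin a`. -/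
def cnot (a : ℕ) : Matrix (Fin a × Fin a) (Fin a × Fin a) ℂ :=
  Matrix.of fun p q => if p.1 = q.1 ∧ p.2 = q.2 + q.1 then 1 else 0

/-- The tensor product `U_{A:M_A} ⊗ U_{B:M_B}` of two two-party operators, with the
global tensor factors grouped as `(A × B) × (M_A × M_B)` (system : apparatus). -/
def pairKron {α α' β β' : Type*} (UA : Matrix (α × α') (α × α') ℂ)
    (UB : Matrix (β × β') (β × β') ℂ) :
    Matrix ((α × β) × (α' × β')) ((α × β) × (α' × β')) ℂ :=
  Matrix.of fun p q => UA (p.1.1, p.2.1) (q.1.1, q.2.1) * UB (p.1.2, p.2.2) (q.1.2, q.2.2)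

/-- A measurement-interaction unitary on system ⊗ apparatus, acting as
`|k⟩|0⟩ ↦ |k⟩|k⟩` on some orthonormal basis `e` (the copies `f k` being orthonormal). -/
def IsCopyUnitary {n : Type*} [Fintype n] [DecidableEq n]
    (U : Matrix (n × n) (n × n) ℂ) (ref : n → ℂ) : Prop :=
  U ∈ Matrix.unitaryGroup (n × n) ℂ ∧
  ∃ e f : n → n → ℂ, OrthonormalFam e ∧ OrthonormalFam f ∧
    ∀ k, U.mulVec (tensorVec (e k) ref) = tensorVec (e k) (f k)

/-- The interaction unitary of the activation protocol,
`U_{S:M} = C_{S:M} (U_S ⊗ 1_M)` with `U_S = U_A ⊗ U_B`. -/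
def activationUnitary {a b : ℕ} (UA : Matrix (Fin a) (Fin a) ℂ)
    (UB : Matrix (Fin b) (Fin b) ℂ) :
    Matrix ((Fin a × Fin b) × (Fin a × Fin b)) ((Fin a × Fin b) × (Fin a × Fin b)) ℂ :=
  pairKron (cnot a) (cnot b) *
    ((UA ⊗ₖ UB) ⊗ₖ (1 : Matrix (Fin a × Fin b) (Fin a × Fin b) ℂ))

/-- The post-interaction system : apparatus state
`ρ̃_{S:M} = U_{S:M} (ρ_S ⊗ |0⟩⟨0|_M) U_{S:M}†` of the activation protocol. -/
def activatedState {a b : ℕ} [NeZero a] [NeZero b] (UA : Matrix (Fin a) (Fin a) ℂ)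
    (UB : Matrix (Fin b) (Fin b) ℂ) (ρ : Matrix (Fin a × Fin b) (Fin a × Fin b) ℂ) :
    Matrix ((Fin a × Fin b) × (Fin a × Fin b)) ((Fin a × Fin b) × (Fin a × Fin b)) ℂ :=
  activationUnitary UA UB * (ρ ⊗ₖ proj (tensorVec (ket0 a) (ket0 b))) *
    (activationUnitary UA UB)ᴴ

/-- Regroup a `(Fin a × Fin b) × (Fin a × Fin b)` matrix as a
`Fin (a*b) × Fin (a*b)` bipartite matrix. -/
def reindexSM {a b : ℕ} (ρ : Matrix ((Fin a × Fin b) × (Fin a × Fin b))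
    ((Fin a × Fin b) × (Fin a × Fin b)) ℂ) :
    Matrix (Fin (a * b) × Fin (a * b)) (Fin (a * b) × Fin (a * b)) ℂ :=
  Matrix.reindex (Equiv.prodCongr finProdFinEquiv finProdFinEquiv)
    (Equiv.prodCongr finProdFinEquiv finProdFinEquiv) ρ

/-- A maximally correlated state `∑_{ij} c_{ij} |i⟩⟨j| ⊗ |i⟩⟨j|`. -/
def maxCorr {n : Type*} [Fintype n] [DecidableEq n] (c : n → n → ℂ) :
    Matrix (n × n) (n × n) ℂ :=
  Matrix.of fun p q => if p.1 = p.2 ∧ q.1 = q.2 then c p.1 q.1 else 0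

/-! ### CLOCC operations -/

/-- The closed set of local operations and classical communication, generated by local
unitaries, local dephasings, addition of local pure ancillas, communication of a
(dephased) subsystem, and relabellings. -/
inductive CLOCC :
    ∀ (A B A' B' : Type), (Matrix (A × B) (A × B) ℂ → Matrix (A' × B') (A' × B') ℂ) → Prop
  | localUnitary {A B : Type} [Fintype A] [DecidableEq A] [Fintype B] [DecidableEq B]
      (UA : Matrix A A ℂ) (UB : Matrix B B ℂ)
      (_ : UA ∈ Matrix.unitaryGroup A ℂ) (_ : UB ∈ Matrix.unitaryGroup B ℂ) :
      CLOCC A B A B fun ρ => (UA ⊗ₖ UB) * ρ * (UA ⊗ₖ UB)ᴴ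
  | dephasingA {A B : Type} [Fintype A] [DecidableEq A] [Fintype B] [DecidableEq B]
      (e : A → A → ℂ) (_ : OrthonormalFam e) :
      CLOCC A B A B fun ρ =>
        ∑ k, (proj (e k) ⊗ₖ (1 : Matrix B B ℂ)) * ρ * (proj (e k) ⊗ₖ (1 : Matrix B B ℂ))
  | dephasingB {A B : Type} [Fintype A] [DecidableEq A] [Fintype B] [DecidableEq B]
      (e : B → B → ℂ) (_ : OrthonormalFam e) :
      CLOCC A B A B fun ρ =>
        ∑ k, ((1 : Matrix A A ℂ) ⊗ₖ proj (e k)) * ρ * ((1 : Matrix A A ℂ) ⊗ₖ proj (e k))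
  | ancillaA {A B C : Type} [Fintype C] (v : C → ℂ) (_ : UnitVec v) :
      CLOCC A B (A × C) B fun ρ =>
        Matrix.of fun p q => ρ (p.1.1, p.2) (q.1.1, q.2) * (v p.1.2 * star (v q.1.2))
  | ancillaB {A B C : Type} [Fintype C] (v : C → ℂ) (_ : UnitVec v) :
      CLOCC A B A (B × C) fun ρ =>
        Matrix.of fun p q => ρ (p.1, p.2.1) (q.1, q.2.1) * (v p.2.2 * star (v q.2.2))
  | commBtoA {A B₁ B₂ : Type} [Fintype A] [DecidableEq A] [Fintype B₁] [DecidableEq B₁]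
      [Fintype B₂] [DecidableEq B₂] (e : B₂ → B₂ → ℂ) (_ : OrthonormalFam e) :
      CLOCC A (B₁ × B₂) (A × B₂) B₁ fun ρ => Matrix.of fun p q =>
        (∑ k, ((1 : Matrix A A ℂ) ⊗ₖ ((1 : Matrix B₁ B₁ ℂ) ⊗ₖ proj (e k))) * ρ *
            ((1 : Matrix A A ℂ) ⊗ₖ ((1 : Matrix B₁ B₁ ℂ) ⊗ₖ proj (e k))))
          (p.1.1, (p.2, p.1.2)) (q.1.1, (q.2, q.1.2))
  | commAtoB {A₁ A₂ B : Type} [Fintype A₁] [DecidableEq A₁] [Fintype A₂] [DecidableEq A₂]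
      [Fintype B] [DecidableEq B] (e : A₂ → A₂ → ℂ) (_ : OrthonormalFam e) :
      CLOCC (A₁ × A₂) B A₁ (B × A₂) fun ρ => Matrix.of fun p q =>
        (∑ k, (((1 : Matrix A₁ A₁ ℂ) ⊗ₖ proj (e k)) ⊗ₖ (1 : Matrix B B ℂ)) * ρ *
            (((1 : Matrix A₁ A₁ ℂ) ⊗ₖ proj (e k)) ⊗ₖ (1 : Matrix B B ℂ)))
          ((p.1, p.2.2), p.2.1) ((q.1, q.2.2), q.2.1)
  | relabel {A B A' B' : Type} (eA : A ≃ A') (eB : B ≃ B') :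
      CLOCC A B A' B' fun ρ =>
        Matrix.reindex (Equiv.prodCongr eA eB) (Equiv.prodCongr eA eB) ρ
  | comp {A B C D E F : Type}
      {Λ : Matrix (A × B) (A × B) ℂ → Matrix (C × D) (C × D) ℂ}
      {Γ : Matrix (C × D) (C × D) ℂ → Matrix (E × F) (E × F) ℂ} :
      CLOCC A B C D Λ → CLOCC C D E F Γ → CLOCC A B E F (Γ ∘ Λ)

/-- The work deficit `Δ(ρ_AB) = inf_{Γ ∈ CLOCC} S(Γ[ρ_AB]) - S(ρ_AB)`. -/
def workDeficit {A B : Type} [Fintype A] [DecidableEq A] [Fintype B] [DecidableEq B]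
    (ρ : Matrix (A × B) (A × B) ℂ) : ℝ :=
  sInf { r | ∃ (a' b' : ℕ)
    (Γ : Matrix (A × B) (A × B) ℂ → Matrix (Fin a' × Fin b') (Fin a' × Fin b') ℂ),
    CLOCC A B (Fin a') (Fin b') Γ ∧ r = entropy (Γ ρ) - entropy ρ }

/-! ### Channels acting on one side -/

/-- The ampliation `id_A ⊗ Φ` of a map `Φ` on the second tensor factor. -/
def ampliate {A B B' : Type*} [Fintype B] (Φ : Matrix B B ℂ → Matrix B' B' ℂ)
    (ρ : Matrix (A × B) (A × B) ℂ) : Matrix (A × B') (A × B') ℂ :=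
  Matrix.of fun p q => Φ (Matrix.of fun b b' => ρ (p.1, b) (q.1, b')) p.2 q.2

/-- The isometric embedding `V = 1_Γ ⊗ |0⟩ : C_Γ → C_Γ ⊗ C_E`. -/
def embed {Γ : Type*} [DecidableEq Γ] (e : ℕ) : Matrix (Γ × Fin (e + 1)) Γ ℂ :=
  Matrix.of fun p g => if p.1 = g ∧ p.2 = 0 then 1 else 0

/-! ### Auxiliary machinery for Statement 8 -/

section Stmt8Aux

/-- General outer product `|v⟩⟨w|`. -/
def outer {n : Type*} (v w : n → ℂ) : Matrix n n ℂ :=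
  Matrix.of fun i j => v i * star (w j)

lemma proj_eq_outer {n : Type*} (v : n → ℂ) : proj v = outer v v := rfl

/-- Sesquilinear form `⟨x| M |y⟩`. -/
def qf {n : Type*} [Fintype n] (x y : n → ℂ) (M : Matrix n n ℂ) : ℂ :=
  star x ⬝ᵥ (M *ᵥ y)

lemma qf_apply {n : Type*} [Fintype n] (x y : n → ℂ) (M : Matrix n n ℂ) :
    qf x y M = ∑ i, ∑ j, star (x i) * M i j * y j := by
  have h0 : qf x y M = ∑ i, star (x i) * ∑ j, M i j * y j := rfl
  rw [h0]
  simp only [Finset.mul_sum]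
  exact Finset.sum_congr rfl fun i _ => Finset.sum_congr rfl fun j _ => by ring

lemma qf_sum {ι : Type*} {n : Type*} [Fintype n] (s : Finset ι) (x y : n → ℂ)
    (M : ι → Matrix n n ℂ) :
    qf x y (∑ i ∈ s, M i) = ∑ i ∈ s, qf x y (M i) := by
  simp only [qf_apply, Matrix.sum_apply]
  have h1 : ∀ a b, star (x a) * (∑ t ∈ s, M t a b) * y b
      = ∑ t ∈ s, star (x a) * M t a b * y b := by
    intro a b
    rw [Finset.mul_sum, Finset.sum_mul]
  simp only [h1]
  calc ∑ a, ∑ b, ∑ t ∈ s, star (x a) * M t a b * y b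
      = ∑ a, ∑ t ∈ s, ∑ b, star (x a) * M t a b * y b :=
        Finset.sum_congr rfl fun a _ => Finset.sum_comm
    _ = ∑ t ∈ s, ∑ a, ∑ b, star (x a) * M t a b * y b := Finset.sum_comm

lemma qf_smul {n : Type*} [Fintype n] (c : ℂ) (x y : n → ℂ) (M : Matrix n n ℂ) :
    qf x y (c • M) = c * qf x y M := by
  simp only [qf_apply, Matrix.smul_apply, smul_eq_mul, Finset.mul_sum]
  refine Finset.sum_congr rfl fun i _ => Finset.sum_congr rfl fun j _ => by ring

lemma qf_outer {n : Type*} [Fintype n] (x y v w : n → ℂ) :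
    qf x y (outer v w) = (∑ i, star (x i) * v i) * (∑ j, star (w j) * y j) := by
  rw [qf_apply, Fintype.sum_mul_sum]
  refine Finset.sum_congr rfl fun i _ => Finset.sum_congr rfl fun j _ => ?_
  simp only [outer, Matrix.of_apply]
  ring

lemma qf_conj {n : Type*} [Fintype n] {M : Matrix n n ℂ} (hM : M.IsHermitian)
    (x y : n → ℂ) : qf x y M = star (qf y x M) := by
  rw [qf_apply, qf_apply, star_sum, Finset.sum_comm]
  refine Finset.sum_congr rfl fun i _ => ?_
  rw [star_sum]
  refine Finset.sum_congr rfl fun j _ => ?_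
  simp only [star_mul, star_star]
  rw [show star (M i j) = M j i from hM.apply j i]
  ring

lemma onfam_unitVec {ι n : Type*} [Fintype n] [DecidableEq ι] {e : ι → n → ℂ}
    (he : OrthonormalFam e) (k : ι) : UnitVec (e k) := by
  have := he k k
  simpa [UnitVec] using this

lemma onfam_gram {n : Type*} [Fintype n] [DecidableEq n] {e : n → n → ℂ}
    (he : OrthonormalFam e) :
    (Matrix.of fun i k => e k i)ᴴ * (Matrix.of fun i k => e k i) = 1 := by
  ext k l
  simpa [Matrix.mul_apply, Matrix.conjTranspose_apply, Matrix.one_apply] using he k l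

lemma onfam_mul_conj {n : Type*} [Fintype n] [DecidableEq n] {e : n → n → ℂ}
    (he : OrthonormalFam e) (i j : n) :
    ∑ k, e k i * star (e k j) = if i = j then 1 else 0 := by
  have h2 : (Matrix.of fun i k => e k i) * (Matrix.of fun i k => e k i)ᴴ = 1 :=
    mul_eq_one_comm.mp (onfam_gram he)
  have h3 : ((Matrix.of fun i k => e k i) * (Matrix.of fun i k => e k i)ᴴ) i j
      = (1 : Matrix n n ℂ) i j := by rw [h2]
  simpa [Matrix.mul_apply, Matrix.conjTranspose_apply, Matrix.one_apply] using h3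

lemma sum_qf_diag {n : Type*} [Fintype n] [DecidableEq n] {u : n → n → ℂ}
    (hu : OrthonormalFam u) (M : Matrix n n ℂ) :
    ∑ m, qf (u m) (u m) M = M.trace := by
  simp only [qf_apply]
  rw [Finset.sum_comm]
  have step : ∀ i : n, (∑ m, ∑ j, star (u m i) * M i j * u m j) = M i i := by
    intro i
    rw [Finset.sum_comm]
    have inner : ∀ j : n, (∑ m, star (u m i) * M i j * u m j)
        = M i j * (if j = i then 1 else 0) := by
      intro j
      rw [← onfam_mul_conj hu j i, Finset.mul_sum]
      refine Finset.sum_congr rfl fun m _ => by ring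
    simp only [inner, mul_ite, mul_one, mul_zero]
    exact Fintype.sum_ite_eq' i (fun j => M i j)
  rw [show (∑ i, ∑ m, ∑ j, star (u m i) * M i j * u m j) = ∑ i, M i i from
    Finset.sum_congr rfl fun i _ => step i]
  rfl

lemma conj_sum_outer {n : Type*} [Fintype n] (W N : Matrix n n ℂ) :
    W * N * Wᴴ = ∑ m, ∑ m', N m m' • outer (fun i => W i m) (fun j => W j m') := by
  ext i j
  simp only [Matrix.sum_apply, Matrix.smul_apply, outer, Matrix.of_apply, smul_eq_mul,
    Matrix.mul_apply, Matrix.conjTranspose_apply]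
  have h1 : ∀ m' : n, (∑ m, W i m * N m m') * star (W j m')
      = ∑ m, N m m' * (W i m * star (W j m')) := by
    intro m'
    rw [Finset.sum_mul]
    exact Finset.sum_congr rfl fun m _ => by ring
  rw [show (∑ m', (∑ m, W i m * N m m') * star (W j m'))
      = ∑ m', ∑ m, N m m' * (W i m * star (W j m')) from
    Finset.sum_congr rfl fun m' _ => h1 m', Finset.sum_comm]

lemma matrix_expansion {n : Type*} [Fintype n] [DecidableEq n] {u : n → n → ℂ}
    (hu : OrthonormalFam u) (M : Matrix n n ℂ) :
    M = ∑ m, ∑ m', qf (u m) (u m') M • outer (u m) (u m') := by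
  set W : Matrix n n ℂ := Matrix.of fun i k => u k i with hW
  have h1 : Wᴴ * W = 1 := onfam_gram hu
  have h2 : W * Wᴴ = 1 := mul_eq_one_comm.mp h1
  have key : W * (Wᴴ * M * W) * Wᴴ = M := by
    have e1 : W * (Wᴴ * M * W) * Wᴴ = W * Wᴴ * M * (W * Wᴴ) := by
      simp only [Matrix.mul_assoc]
    rw [e1, h2, Matrix.one_mul, Matrix.mul_one]
  have coeff : ∀ m m' : n, (Wᴴ * M * W) m m' = qf (u m) (u m') M := by
    intro m m'
    have h0 : (Wᴴ * M * W) m m' = ∑ j, (∑ i, star (u m i) * M i j) * u m' j := rfl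
    rw [h0, qf_apply]
    simp only [Finset.sum_mul]
    rw [Finset.sum_comm]
  conv_lhs => rw [← key, conj_sum_outer]
  refine Finset.sum_congr rfl fun m _ => Finset.sum_congr rfl fun m' _ => ?_
  rw [coeff]
  rfl

lemma outer_kron {A B : Type*} (x y : A → ℂ) (v w : B → ℂ) :
    outer x y ⊗ₖ outer v w = outer (tensorVec x v) (tensorVec y w) := by
  ext ⟨i, k⟩ ⟨j, l⟩
  simp only [Matrix.kronecker_apply, outer, Matrix.of_apply, tensorVec, star_mul']
  ring

lemma sum_kronecker_left {ι A B : Type*} (s : Finset ι) (M : ι → Matrix A A ℂ)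
    (N : Matrix B B ℂ) :
    (∑ i ∈ s, M i) ⊗ₖ N = ∑ i ∈ s, M i ⊗ₖ N := by
  ext ⟨a, b⟩ ⟨c, d⟩
  simp [Matrix.kronecker_apply, Matrix.sum_apply, Finset.sum_mul]

lemma kron_mulVec {A B : Type*} [Fintype A] [Fintype B] (M : Matrix A A ℂ)
    (N : Matrix B B ℂ) (x : A → ℂ) (y : B → ℂ) :
    (M ⊗ₖ N) *ᵥ tensorVec x y = tensorVec (M *ᵥ x) (N *ᵥ y) := by
  funext p
  obtain ⟨i, k⟩ := p
  have h0 : ((M ⊗ₖ N) *ᵥ tensorVec x y) (i, k)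
      = ∑ q : A × B, (M i q.1 * N k q.2) * (x q.1 * y q.2) := rfl
  have h1 : tensorVec (M *ᵥ x) (N *ᵥ y) (i, k)
      = (∑ j, M i j * x j) * (∑ l, N k l * y l) := rfl
  rw [h0, h1, Fintype.sum_mul_sum, Fintype.sum_prod_type]
  exact Finset.sum_congr rfl fun j _ => Finset.sum_congr rfl fun l _ => by ring

lemma mul_outer_mul {n : Type*} [Fintype n] (P : Matrix n n ℂ) (x y : n → ℂ) :
    P * outer x y * Pᴴ = outer (P *ᵥ x) (P *ᵥ y) := by
  ext i j
  have hL : (P * outer x y * Pᴴ) i j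
      = ∑ l, (∑ k, P i k * (x k * star (y l))) * star (P j l) := rfl
  have hR : outer (P *ᵥ x) (P *ᵥ y) i j
      = (∑ k, P i k * x k) * star (∑ l, P j l * y l) := rfl
  rw [hL, hR, star_sum, Fintype.sum_mul_sum]
  simp only [Finset.sum_mul]
  rw [Finset.sum_comm]
  refine Finset.sum_congr rfl fun k _ => Finset.sum_congr rfl fun l _ => ?_
  simp only [star_mul']
  ring

lemma pairKron_mulVec {α β α' β' : Type*} [Fintype α] [Fintype β] [Fintype α'] [Fintype β']
    (M : Matrix (α × α') (α × α') ℂ) (N : Matrix (β × β') (β × β') ℂ)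
    (x : α × α' → ℂ) (y : β × β' → ℂ) :
    pairKron M N *ᵥ (fun p => x (p.1.1, p.2.1) * y (p.1.2, p.2.2)) =
      fun p => (M *ᵥ x) (p.1.1, p.2.1) * (N *ᵥ y) (p.1.2, p.2.2) := by
  funext p
  obtain ⟨⟨a, b⟩, c, d⟩ := p
  have h0 : (pairKron M N *ᵥ (fun p => x (p.1.1, p.2.1) * y (p.1.2, p.2.2))) ((a, b), c, d)
      = ∑ q : (α × β) × α' × β',
          (M (a, c) (q.1.1, q.2.1) * N (b, d) (q.1.2, q.2.2)) *
            (x (q.1.1, q.2.1) * y (q.1.2, q.2.2)) := rfl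
  have h1 : (M *ᵥ x) (a, c) * (N *ᵥ y) (b, d)
      = (∑ qa : α × α', M (a, c) qa * x qa) * (∑ qb : β × β', N (b, d) qb * y qb) := rfl
  show _ = (M *ᵥ x) (a, c) * (N *ᵥ y) (b, d)
  rw [h0, h1]
  rw [show (∑ qa : α × α', M (a, c) qa * x qa) = ∑ q1 : α, ∑ q3 : α', M (a, c) (q1, q3) * x (q1, q3)
    from Fintype.sum_prod_type _]
  rw [show (∑ qb : β × β', N (b, d) qb * y qb) = ∑ q2 : β, ∑ q4 : β', N (b, d) (q2, q4) * y (q2, q4)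
    from Fintype.sum_prod_type _]
  rw [Fintype.sum_mul_sum]
  rw [show (∑ q : (α × β) × α' × β',
        (M (a, c) (q.1.1, q.2.1) * N (b, d) (q.1.2, q.2.2)) *
          (x (q.1.1, q.2.1) * y (q.1.2, q.2.2)))
      = ∑ q1 : α, ∑ q2 : β, ∑ q3 : α', ∑ q4 : β',
          (M (a, c) (q1, q3) * N (b, d) (q2, q4)) * (x (q1, q3) * y (q2, q4)) from by
    rw [Fintype.sum_prod_type, Fintype.sum_prod_type]
    refine Finset.sum_congr rfl fun q1 _ => Finset.sum_congr rfl fun q2 _ => ?_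
    rw [Fintype.sum_prod_type]]
  refine Finset.sum_congr rfl fun q1 _ => Finset.sum_congr rfl fun q2 _ => ?_
  rw [Fintype.sum_mul_sum]
  refine Finset.sum_congr rfl fun q3 _ => Finset.sum_congr rfl fun q4 _ => by ring

lemma inner_tensorVec {A B : Type*} [Fintype A] [Fintype B] (x v : A → ℂ) (y w : B → ℂ) :
    ∑ p : A × B, star (tensorVec x y p) * tensorVec v w p =
      (∑ i, star (x i) * v i) * (∑ j, star (y j) * w j) := by
  rw [Fintype.sum_mul_sum, Fintype.sum_prod_type]
  refine Finset.sum_congr rfl fun i _ => Finset.sum_congr rfl fun j _ => ?_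
  simp only [tensorVec, star_mul']
  ring

lemma onfam_tensor {A B : Type*} [Fintype A] [DecidableEq A] [Fintype B] [DecidableEq B]
    {eA : A → A → ℂ} {eB : B → B → ℂ} (hA : OrthonormalFam eA) (hB : OrthonormalFam eB) :
    OrthonormalFam (fun m : A × B => tensorVec (eA m.1) (eB m.2)) := by
  intro i j
  have h := inner_tensorVec (eA i.1) (eA j.1) (eB i.2) (eB j.2)
  rw [h, hA i.1 j.1, hB i.2 j.2]
  by_cases h1 : i.1 = j.1 <;> by_cases h2 : i.2 = j.2 <;>
    simp [h1, h2, Prod.ext_iff]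

lemma qf_kron {A B : Type*} [Fintype A] [Fintype B] (x1 y1 : A → ℂ) (x2 y2 : B → ℂ)
    (S : Matrix A A ℂ) (T : Matrix B B ℂ) :
    qf (tensorVec x1 x2) (tensorVec y1 y2) (S ⊗ₖ T) = qf x1 y1 S * qf x2 y2 T := by
  rw [qf_apply, qf_apply, qf_apply]
  symm
  rw [show (∑ i, ∑ j, star (x1 i) * S i j * y1 j) * (∑ i, ∑ j, star (x2 i) * T i j * y2 j)
      = ∑ p1, ∑ p2, (∑ q1, star (x1 p1) * S p1 q1 * y1 q1) *
          (∑ q2, star (x2 p2) * T p2 q2 * y2 q2) from Fintype.sum_mul_sum _ _]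
  rw [show (∑ p : A × B, ∑ q : A × B,
        star (tensorVec x1 x2 p) * (S ⊗ₖ T) p q * tensorVec y1 y2 q)
      = ∑ p1 : A, ∑ p2 : B, ∑ q1 : A, ∑ q2 : B,
          star (tensorVec x1 x2 (p1, p2)) * (S ⊗ₖ T) (p1, p2) (q1, q2) *
            tensorVec y1 y2 (q1, q2) from by
    rw [Fintype.sum_prod_type]
    refine Finset.sum_congr rfl fun p1 _ => Finset.sum_congr rfl fun p2 _ => ?_
    rw [Fintype.sum_prod_type]]
  refine Finset.sum_congr rfl fun p1 _ => Finset.sum_congr rfl fun p2 _ => ?_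
  rw [Fintype.sum_mul_sum]
  refine Finset.sum_congr rfl fun q1 _ => Finset.sum_congr rfl fun q2 _ => ?_
  simp only [Matrix.kronecker_apply, tensorVec, star_mul']
  ring

lemma posSemidef_proj {n : Type*} [Fintype n] (v : n → ℂ) : (proj v).PosSemidef := by
  refine Matrix.PosSemidef.of_dotProduct_mulVec_nonneg ?_ ?_
  · ext i j
    simp only [Matrix.conjTranspose_apply, proj, Matrix.of_apply, star_mul', star_star]
    ring
  · intro x
    have h0 : star x ⬝ᵥ (proj v *ᵥ x) = ∑ i, star (x i) * ∑ j, (v i * star (v j)) * x j := rfl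
    have h1 : star x ⬝ᵥ (proj v *ᵥ x)
        = ∑ i, ∑ j, (v i * star (x i)) * (star (v j) * x j) := by
      rw [h0]
      simp only [Finset.mul_sum]
      exact Finset.sum_congr rfl fun i _ => Finset.sum_congr rfl fun j _ => by ring
    show 0 ≤ star x ⬝ᵥ (proj v *ᵥ x)
    rw [h1, ← Fintype.sum_mul_sum]
    have h2 : (∑ i, v i * star (x i)) = star (∑ j, star (v j) * x j) := by
      rw [star_sum]
      refine Finset.sum_congr rfl fun i _ => ?_
      simp only [star_mul, star_star]
      ring
    rw [h2]
    exact star_mul_self_nonneg _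

lemma isDensityMatrix_proj {n : Type*} [Fintype n] {v : n → ℂ} (hv : UnitVec v) :
    IsDensityMatrix (proj v) := by
  refine ⟨posSemidef_proj v, ?_⟩
  have h0 : (proj v).trace = ∑ i, v i * star (v i) := rfl
  rw [h0, show (∑ i, v i * star (v i)) = ∑ i, star (v i) * v i from
    Finset.sum_congr rfl fun i _ => mul_comm _ _]
  exact hv

lemma qf_nonneg {n : Type*} [Fintype n] {M : Matrix n n ℂ} (hM : M.PosSemidef)
    (x : n → ℂ) : 0 ≤ qf x x M := hM.dotProduct_mulVec_nonneg x

/-- Construction of a copy unitary in an arbitrary orthonormal basis. -/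
lemma exists_copyUnitary {A : Type*} [Fintype A] [DecidableEq A] (e : A → A → ℂ)
    (he : OrthonormalFam e) (k₀ : A) :
    ∃ U : Matrix (A × A) (A × A) ℂ, IsCopyUnitary U (e k₀) ∧
      ∀ k, U *ᵥ tensorVec (e k) (e k₀) = tensorVec (e k) (e k) := by
  classical
  set W : Matrix A A ℂ := Matrix.of fun i k => e k i with hWdef
  have hWW : Wᴴ * W = 1 := onfam_gram he
  have hWW' : W * Wᴴ = 1 := mul_eq_one_comm.mp hWW
  set φ : A × A → A × A := fun p => (p.1, Equiv.swap k₀ p.1 p.2) with hφdef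
  have hφφ : ∀ p, φ (φ p) = p := by
    intro p
    simp [hφdef, Equiv.swap_apply_self]
  set C : Matrix (A × A) (A × A) ℂ := Matrix.of fun p q => if q = φ p then 1 else 0
    with hCdef
  have hCCT : C * Cᴴ = 1 := by
    ext p q
    have hL : (C * Cᴴ) p q = ∑ r, (if r = φ p then (1 : ℂ) else 0) *
        star (if r = φ q then (1 : ℂ) else 0) := rfl
    have hterm : ∀ r, (if r = φ p then (1 : ℂ) else 0) * star (if r = φ q then (1 : ℂ) else 0)
        = if r = φ p then (if r = φ q then 1 else 0) else 0 := by
      intro r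
      by_cases h1 : r = φ p <;> by_cases h2 : r = φ q <;> simp [h1, h2]
    rw [hL, show (∑ r, (if r = φ p then (1 : ℂ) else 0) * star (if r = φ q then (1 : ℂ) else 0))
        = ∑ r, if r = φ p then (if r = φ q then (1 : ℂ) else 0) else 0 from
      Finset.sum_congr rfl fun r _ => hterm r]
    rw [Fintype.sum_ite_eq' (φ p) (fun r => if r = φ q then (1 : ℂ) else 0)]
    by_cases h : p = q
    · subst h
      simp [Matrix.one_apply]
    · have hne : φ p ≠ φ q := fun hc => h (by rw [← hφφ p, hc, hφφ])
      simp [Matrix.one_apply, h, hne]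
  have hKT : (W ⊗ₖ W)ᴴ = Wᴴ ⊗ₖ Wᴴ := by
    ext ⟨a, b⟩ ⟨c, d⟩
    simp only [Matrix.conjTranspose_apply, Matrix.kronecker_apply, star_mul']
  have hK1 : (W ⊗ₖ W)ᴴ * (W ⊗ₖ W) = 1 := by
    rw [hKT, ← Matrix.mul_kronecker_mul, hWW, Matrix.one_kronecker_one]
  have hK2 : (W ⊗ₖ W) * (W ⊗ₖ W)ᴴ = 1 := by
    rw [hKT, ← Matrix.mul_kronecker_mul, hWW', Matrix.one_kronecker_one]
  set U : Matrix (A × A) (A × A) ℂ := (W ⊗ₖ W) * C * (W ⊗ₖ W)ᴴ with hUdef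
  have hUunit : U ∈ Matrix.unitaryGroup (A × A) ℂ := by
    rw [Matrix.mem_unitaryGroup_iff]
    have hstar : star U = (W ⊗ₖ W) * Cᴴ * (W ⊗ₖ W)ᴴ := by
      rw [Matrix.star_eq_conjTranspose, hUdef, Matrix.conjTranspose_mul,
        Matrix.conjTranspose_mul, Matrix.conjTranspose_conjTranspose, Matrix.mul_assoc]
    rw [hstar, hUdef]
    calc (W ⊗ₖ W) * C * (W ⊗ₖ W)ᴴ * ((W ⊗ₖ W) * Cᴴ * (W ⊗ₖ W)ᴴ)
        = (W ⊗ₖ W) * C * ((W ⊗ₖ W)ᴴ * (W ⊗ₖ W)) * (Cᴴ * (W ⊗ₖ W)ᴴ) := by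
          simp only [Matrix.mul_assoc]
      _ = (W ⊗ₖ W) * (C * Cᴴ) * (W ⊗ₖ W)ᴴ := by
          rw [hK1, Matrix.mul_one]
          simp only [Matrix.mul_assoc]
      _ = 1 := by rw [hCCT, Matrix.mul_one, hK2]
  have hWe : ∀ k, Wᴴ *ᵥ e k = fun i => if i = k then 1 else 0 := by
    intro k
    funext i
    have h0 : (Wᴴ *ᵥ e k) i = ∑ j, star (e i j) * e k j := rfl
    rw [h0, he i k]
  have hWs : ∀ k, W *ᵥ (fun i => if i = k then 1 else 0) = e k := by
    intro k
    funext i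
    have h0 : (W *ᵥ (fun i => if i = k then 1 else 0)) i
        = ∑ j, e j i * (if j = k then (1 : ℂ) else 0) := rfl
    rw [h0]
    simp [mul_ite, Fintype.sum_ite_eq']
  have hCv : ∀ v : A × A → ℂ, C *ᵥ v = fun p => v (φ p) := by
    intro v
    funext p
    have h0 : (C *ᵥ v) p = ∑ q, (if q = φ p then (1 : ℂ) else 0) * v q := rfl
    rw [h0]
    simp [ite_mul, Fintype.sum_ite_eq']
  have hmain : ∀ k, U *ᵥ tensorVec (e k) (e k₀) = tensorVec (e k) (e k) := by
    intro k
    have s1 : (W ⊗ₖ W)ᴴ *ᵥ tensorVec (e k) (e k₀)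
        = tensorVec (fun i => if i = k then 1 else 0) (fun i => if i = k₀ then 1 else 0) := by
      rw [hKT, kron_mulVec, hWe, hWe]
    have s2 : C *ᵥ tensorVec (fun i => if i = k then (1 : ℂ) else 0)
        (fun i => if i = k₀ then 1 else 0)
        = tensorVec (fun i => if i = k then 1 else 0) (fun i => if i = k then 1 else 0) := by
      rw [hCv]
      funext p
      obtain ⟨p1, p2⟩ := p
      simp only [tensorVec, hφdef]
      by_cases h : p1 = k
      · subst h
        have hiff : ((Equiv.swap k₀ p1) p2 = k₀) ↔ (p2 = p1) := by
          constructor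
          · intro hc
            have hc2 := congrArg (Equiv.swap k₀ p1) hc
            rwa [Equiv.swap_apply_self, Equiv.swap_apply_left] at hc2
          · intro hc
            rw [hc, Equiv.swap_apply_right]
        simp [hiff]
      · simp [h]
    have s3 : (W ⊗ₖ W) *ᵥ tensorVec (fun i => if i = k then (1 : ℂ) else 0)
        (fun i => if i = k then 1 else 0) = tensorVec (e k) (e k) := by
      rw [kron_mulVec, hWs]
    rw [hUdef, ← Matrix.mulVec_mulVec, ← Matrix.mulVec_mulVec, s1, s2, s3]
  exact ⟨U, ⟨hUunit, e, e, he, he, hmain⟩, hmain⟩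

/-- The fundamental form of the activated state. -/
lemma activated_eq {A B : Type*} [Fintype A] [DecidableEq A] [Fintype B] [DecidableEq B]
    (UA : Matrix (A × A) (A × A) ℂ) (UB : Matrix (B × B) (B × B) ℂ)
    (refA : A → ℂ) (refB : B → ℂ) (eA fA : A → A → ℂ) (eB fB : B → B → ℂ)
    (heA : OrthonormalFam eA) (heB : OrthonormalFam eB)
    (hA : ∀ k, UA *ᵥ tensorVec (eA k) refA = tensorVec (eA k) (fA k))
    (hB : ∀ k, UB *ᵥ tensorVec (eB k) refB = tensorVec (eB k) (fB k))
    (ρ : Matrix (A × B) (A × B) ℂ) :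
    pairKron UA UB * (ρ ⊗ₖ proj (tensorVec refA refB)) * (pairKron UA UB)ᴴ =
      ∑ m : A × B, ∑ m' : A × B,
        qf (tensorVec (eA m.1) (eB m.2)) (tensorVec (eA m'.1) (eB m'.2)) ρ •
          outer (tensorVec (tensorVec (eA m.1) (eB m.2)) (tensorVec (fA m.1) (fB m.2)))
                (tensorVec (tensorVec (eA m'.1) (eB m'.2)) (tensorVec (fA m'.1) (fB m'.2))) := by
  have hu : OrthonormalFam (fun m : A × B => tensorVec (eA m.1) (eB m.2)) :=
    onfam_tensor heA heB
  have key : ∀ m : A × B, pairKron UA UB *ᵥ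
      tensorVec (tensorVec (eA m.1) (eB m.2)) (tensorVec refA refB)
      = tensorVec (tensorVec (eA m.1) (eB m.2)) (tensorVec (fA m.1) (fB m.2)) := by
    intro m
    have h1 : tensorVec (tensorVec (eA m.1) (eB m.2)) (tensorVec refA refB)
        = fun p : (A × B) × (A × B) => tensorVec (eA m.1) refA (p.1.1, p.2.1) *
            tensorVec (eB m.2) refB (p.1.2, p.2.2) := by
      funext p
      simp only [tensorVec]
      ring
    rw [h1, pairKron_mulVec, hA, hB]
    funext p
    simp only [tensorVec]
    ring
  conv_lhs => rw [matrix_expansion hu ρ]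
  rw [sum_kronecker_left]
  simp_rw [sum_kronecker_left, Matrix.smul_kronecker, proj_eq_outer, outer_kron]
  simp_rw [Matrix.mul_sum, Matrix.sum_mul, Matrix.mul_smul, Matrix.smul_mul,
    mul_outer_mul, key]

/-- Core of the reverse direction: separability of a maximally-correlated-form state
forces the coefficient matrix to be diagonal with nonnegative diagonal. -/
lemma sep_core {n : Type*} [Fintype n] [DecidableEq n] {u w : n → n → ℂ}
    (hu : OrthonormalFam u) (hw : OrthonormalFam w)
    {X : Matrix (n × n) (n × n) ℂ} {r : n → n → ℂ}
    (hX : X = ∑ m, ∑ m', r m m' •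
      outer (tensorVec (u m) (w m)) (tensorVec (u m') (w m')))
    {N : ℕ} {q : Fin N → ℝ} {σS σM : Fin N → Matrix n n ℂ}
    (hq0 : ∀ i, 0 ≤ q i) (hσS : ∀ i, IsDensityMatrix (σS i))
    (hσM : ∀ i, IsDensityMatrix (σM i))
    (hsepEq : X = ∑ i, (q i : ℂ) • (σS i ⊗ₖ σM i)) :
    (∀ m m', m ≠ m' → r m m' = 0) ∧ (∀ m, 0 ≤ r m m) := by
  have hu' : ∀ i j, (∑ x, star (u i x) * u j x) = if i = j then (1 : ℂ) else 0 := hu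
  have hw' : ∀ i j, (∑ x, star (w i x) * w j x) = if i = j then (1 : ℂ) else 0 := hw
  have hqfX : ∀ x y x' y' : n → ℂ, qf (tensorVec x y) (tensorVec x' y') X
      = ∑ m, ∑ m', r m m' *
          (((∑ i, star (x i) * u m i) * (∑ j, star (y j) * w m j)) *
           ((∑ i, star (u m' i) * x' i) * (∑ j, star (w m' j) * y' j))) := by
    intro x y x' y'
    rw [hX, qf_sum]
    refine Finset.sum_congr rfl fun m _ => ?_
    rw [qf_sum]
    refine Finset.sum_congr rfl fun m' _ => ?_
    rw [qf_smul, qf_outer, inner_tensorVec, inner_tensorVec]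
  have hqfY : ∀ x y x' y' : n → ℂ, qf (tensorVec x y) (tensorVec x' y') X
      = ∑ i, (q i : ℂ) * (qf x x' (σS i) * qf y y' (σM i)) := by
    intro x y x' y'
    rw [hsepEq, qf_sum]
    exact Finset.sum_congr rfl fun i _ => by rw [qf_smul, qf_kron]
  have key1 : ∀ m m' : n, qf (tensorVec (u m) (w m)) (tensorVec (u m') (w m')) X = r m m' := by
    intro m m'
    rw [hqfX]
    have hterm : ∀ mm mm' : n, r mm mm' *
        (((∑ i, star (u m i) * u mm i) * (∑ j, star (w m j) * w mm j)) *
         ((∑ i, star (u mm' i) * u m' i) * (∑ j, star (w mm' j) * w m' j)))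
        = if mm' = m' then (if m = mm then r mm mm' else 0) else 0 := by
      intro mm mm'
      rw [show (∑ i, star (u m i) * u mm i) = if m = mm then (1 : ℂ) else 0 from hu' m mm,
        show (∑ j, star (w m j) * w mm j) = if m = mm then (1 : ℂ) else 0 from hw' m mm,
        show (∑ i, star (u mm' i) * u m' i) = if mm' = m' then (1 : ℂ) else 0 from hu' mm' m',
        show (∑ j, star (w mm' j) * w m' j) = if mm' = m' then (1 : ℂ) else 0 from hw' mm' m']
      by_cases h1 : m = mm <;> by_cases h2 : mm' = m' <;> simp [h1, h2]
    rw [Finset.sum_congr rfl fun mm _ => Finset.sum_congr rfl fun mm' _ => hterm mm mm']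
    rw [Finset.sum_congr rfl fun mm _ =>
      Fintype.sum_ite_eq' m' (fun mm' => if m = mm then r mm mm' else 0)]
    rw [Fintype.sum_ite_eq m (fun mm => r mm m')]
  have key3 : ∀ m m' : n, m ≠ m' →
      qf (tensorVec (u m) (w m')) (tensorVec (u m) (w m')) X = 0 := by
    intro m m' hne
    rw [hqfX]
    apply Finset.sum_eq_zero
    intro mm _
    apply Finset.sum_eq_zero
    intro mm' _
    rw [show (∑ i, star (u m i) * u mm i) = if m = mm then (1 : ℂ) else 0 from hu' m mm,
      show (∑ j, star (w m' j) * w mm j) = if m' = mm then (1 : ℂ) else 0 from hw' m' mm,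
      show (∑ i, star (u mm' i) * u m i) = if mm' = m then (1 : ℂ) else 0 from hu' mm' m,
      show (∑ j, star (w mm' j) * w m' j) = if mm' = m' then (1 : ℂ) else 0 from hw' mm' m']
    by_cases h1 : m = mm
    · have h2 : m' ≠ mm := fun hc => hne (h1.trans hc.symm)
      simp [h2]
    · simp [h1]
  have hterm_nonneg : ∀ (m m' : n) (i : Fin N),
      0 ≤ (q i : ℂ) * (qf (u m) (u m) (σS i) * qf (w m') (w m') (σM i)) := by
    intro m m' i
    have h1 : (0 : ℂ) ≤ (q i : ℂ) := Complex.zero_le_real.mpr (hq0 i)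
    exact mul_nonneg h1 (mul_nonneg (qf_nonneg (hσS i).1 _) (qf_nonneg (hσM i).1 _))
  have hzero : ∀ m m' : n, m ≠ m' → ∀ i : Fin N,
      (q i : ℂ) * (qf (u m) (u m) (σS i) * qf (w m') (w m') (σM i)) = 0 := by
    intro m m' hne
    have hsum0 : ∑ i, (q i : ℂ) * (qf (u m) (u m) (σS i) * qf (w m') (w m') (σM i)) = 0 := by
      rw [← hqfY, key3 m m' hne]
    intro i
    exact (Finset.sum_eq_zero_iff_of_nonneg (fun i _ => hterm_nonneg m m' i)).mp
      hsum0 i (Finset.mem_univ i)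
  have hSoff : ∀ i : Fin N, q i ≠ 0 → ∀ m m' : n, m ≠ m' → qf (u m) (u m') (σS i) = 0 := by
    intro i hqi
    have hst : ∀ m m', m ≠ m' →
        qf (u m) (u m) (σS i) * qf (w m') (w m') (σM i) = 0 := by
      intro m m' hne
      have h0 := hzero m m' hne i
      have hqc : ((q i : ℝ) : ℂ) ≠ 0 := by
        simpa using hqi
      exact (mul_eq_zero.mp h0).resolve_left hqc
    have hsum_s : ∑ m, qf (u m) (u m) (σS i) = 1 := by
      rw [sum_qf_diag hu (σS i), (hσS i).2]
    have hsum_t : ∑ m, qf (w m) (w m) (σM i) = 1 := by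
      rw [sum_qf_diag hw (σM i), (hσM i).2]
    obtain ⟨m₀, hm₀⟩ : ∃ m₀, qf (u m₀) (u m₀) (σS i) ≠ 0 := by
      by_contra hc
      push_neg at hc
      rw [Finset.sum_eq_zero (fun m _ => hc m)] at hsum_s
      exact one_ne_zero hsum_s.symm
    have ht0 : ∀ m', m' ≠ m₀ → qf (w m') (w m') (σM i) = 0 := fun m' hm' =>
      (mul_eq_zero.mp (hst m₀ m' (fun hc => hm' hc.symm))).resolve_left hm₀
    have htm₀ : qf (w m₀) (w m₀) (σM i) = 1 := by
      have hs : ∑ m, qf (w m) (w m) (σM i) = qf (w m₀) (w m₀) (σM i) :=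
        Finset.sum_eq_single m₀ (fun m _ hm => ht0 m hm)
          (fun h => absurd (Finset.mem_univ m₀) h)
      rw [← hs]
      exact hsum_t
    have hs0 : ∀ m, m ≠ m₀ → qf (u m) (u m) (σS i) = 0 := by
      intro m hm
      have := hst m m₀ hm
      rw [htm₀, mul_one] at this
      exact this
    intro m m' hne
    by_cases h : m' = m₀
    · subst h
      have hmv : σS i *ᵥ u m = 0 :=
        ((hσS i).1.dotProduct_mulVec_zero_iff (u m)).mp (hs0 m hne)
      have h2 : qf (u m') (u m) (σS i) = 0 := by
        show star (u m') ⬝ᵥ (σS i *ᵥ u m) = 0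
        rw [hmv, dotProduct_zero]
      rw [qf_conj (hσS i).1.1, h2, star_zero]
    · have hmv : σS i *ᵥ u m' = 0 :=
        ((hσS i).1.dotProduct_mulVec_zero_iff (u m')).mp (hs0 m' h)
      show star (u m) ⬝ᵥ (σS i *ᵥ u m') = 0
      rw [hmv, dotProduct_zero]
  constructor
  · intro m m' hne
    rw [← key1 m m', hqfY]
    apply Finset.sum_eq_zero
    intro i _
    by_cases hqi : q i = 0
    · simp [hqi]
    · rw [hSoff i hqi m m' hne]
      ring
  · intro m
    rw [← key1 m m, hqfY]
    exact Finset.sum_nonneg fun i _ => hterm_nonneg m m i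

end Stmt8Aux

/-- a bipartite state is classically correlated if and only if there exists
a measurement-interaction (basis-copying) unitary `U_{S:M} = U_{A:M_A} ⊗ U_{B:M_B}` such
that the post-interaction state is separable across the system : apparatus cut. -/
theorem classicallyCorrelated_iff_activated_separable {A B : Type*} [Fintype A]
    [DecidableEq A] [Fintype B] [DecidableEq B]
    (ρ : Matrix (A × B) (A × B) ℂ) (hρ : IsDensityMatrix ρ) :
    IsCCState ρ ↔
      ∃ (UA : Matrix (A × A) (A × A) ℂ) (UB : Matrix (B × B) (B × B) ℂ)
        (refA : A → ℂ) (refB : B → ℂ),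
        UnitVec refA ∧ UnitVec refB ∧ IsCopyUnitary UA refA ∧ IsCopyUnitary UB refB ∧
        IsSeparable (pairKron UA UB * (ρ ⊗ₖ proj (tensorVec refA refB)) *
          (pairKron UA UB)ᴴ) := by
  have hneAB : Nonempty (A × B) := by
    by_contra h
    rw [not_nonempty_iff] at h
    have h1 := hρ.2
    rw [show ρ.trace = 0 from by
      haveI := h
      simp [Matrix.trace, Finset.univ_eq_empty]] at h1
    exact one_ne_zero h1.symm
  obtain ⟨⟨k₀, l₀⟩⟩ := hneAB
  constructor
  · rintro ⟨a, b, p, ha, hb, hp, hpsum, hrep⟩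
    obtain ⟨UA, hUA, hUAv⟩ := exists_copyUnitary a ha k₀
    obtain ⟨UB, hUB, hUBv⟩ := exists_copyUnitary b hb l₀
    refine ⟨UA, UB, a k₀, b l₀, onfam_unitVec ha k₀, onfam_unitVec hb l₀, hUA, hUB, ?_⟩
    have hu : OrthonormalFam (fun m : A × B => tensorVec (a m.1) (b m.2)) :=
      onfam_tensor ha hb
    have hu' : ∀ m n : A × B,
        (∑ i, star (tensorVec (a m.1) (b m.2) i) * tensorVec (a n.1) (b n.2) i)
          = if m = n then (1 : ℂ) else 0 := hu
    have hact := activated_eq UA UB (a k₀) (b l₀) a a b b ha hb hUAv hUBv ρ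
    have hq : ∀ m m' : A × B,
        qf (tensorVec (a m.1) (b m.2)) (tensorVec (a m'.1) (b m'.2)) ρ
          = if m = m' then ((p m.1 m.2 : ℝ) : ℂ) else 0 := by
      intro m m'
      rw [hrep, qf_sum]
      have hterm : ∀ k : A,
          qf (tensorVec (a m.1) (b m.2)) (tensorVec (a m'.1) (b m'.2))
            (∑ j, ((p k j : ℝ) : ℂ) • proj (tensorVec (a k) (b j)))
          = ∑ j : B, ((p k j : ℝ) : ℂ) *
              ((if m = (k, j) then (1 : ℂ) else 0) * (if (k, j) = m' then (1 : ℂ) else 0)) := by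
        intro k
        rw [qf_sum]
        refine Finset.sum_congr rfl fun j _ => ?_
        rw [qf_smul, proj_eq_outer, qf_outer]
        rw [show (∑ i, star (tensorVec (a m.1) (b m.2) i) * tensorVec (a k) (b j) i)
            = if m = (k, j) then (1 : ℂ) else 0 from hu' m (k, j)]
        rw [show (∑ i, star (tensorVec (a k) (b j) i) * tensorVec (a m'.1) (b m'.2) i)
            = if (k, j) = m' then (1 : ℂ) else 0 from hu' (k, j) m']
      rw [Finset.sum_congr rfl fun k _ => hterm k]
      obtain ⟨m1, m2⟩ := m
      obtain ⟨m1', m2'⟩ := m'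
      by_cases h : (m1, m2) = (m1', m2')
      · rw [if_pos h]
        obtain ⟨h1, h2⟩ := Prod.mk.injEq .. ▸ h
        subst h1; subst h2
        rw [Finset.sum_eq_single m1]
        · rw [Finset.sum_eq_single m2]
          · simp
          · intro j _ hj
            simp [Prod.ext_iff, hj]
          · intro hmem
            exact absurd (Finset.mem_univ m2) hmem
        · intro k _ hk
          apply Finset.sum_eq_zero
          intro j _
          simp [Prod.ext_iff, hk]
        · intro hmem
          exact absurd (Finset.mem_univ m1) hmem
      · rw [if_neg h]
        apply Finset.sum_eq_zero
        intro k _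
        apply Finset.sum_eq_zero
        intro j _
        by_cases h1 : (m1, m2) = (k, j)
        · have h2 : (k, j) ≠ (m1', m2') := fun hc => h (h1.trans hc)
          simp [h2]
        · simp [h1]
    rw [hact]
    have hsimp : (∑ m : A × B, ∑ m' : A × B,
        qf (tensorVec (a m.1) (b m.2)) (tensorVec (a m'.1) (b m'.2)) ρ •
          outer (tensorVec (tensorVec (a m.1) (b m.2)) (tensorVec (a m.1) (b m.2)))
                (tensorVec (tensorVec (a m'.1) (b m'.2)) (tensorVec (a m'.1) (b m'.2))))
        = ∑ m : A × B, ((p m.1 m.2 : ℝ) : ℂ) •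
            (proj (tensorVec (a m.1) (b m.2)) ⊗ₖ proj (tensorVec (a m.1) (b m.2))) := by
      refine Finset.sum_congr rfl fun m _ => ?_
      have hinner : ∀ m' : A × B,
          qf (tensorVec (a m.1) (b m.2)) (tensorVec (a m'.1) (b m'.2)) ρ •
            outer (tensorVec (tensorVec (a m.1) (b m.2)) (tensorVec (a m.1) (b m.2)))
                  (tensorVec (tensorVec (a m'.1) (b m'.2)) (tensorVec (a m'.1) (b m'.2)))
          = if m = m' then ((p m.1 m.2 : ℝ) : ℂ) •
              outer (tensorVec (tensorVec (a m.1) (b m.2)) (tensorVec (a m.1) (b m.2)))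
                    (tensorVec (tensorVec (a m'.1) (b m'.2)) (tensorVec (a m'.1) (b m'.2)))
            else 0 := by
        intro m'
        rw [hq]
        by_cases h : m = m' <;> simp [h]
      rw [Finset.sum_congr rfl fun m' _ => hinner m', Finset.sum_ite_eq, if_pos (Finset.mem_univ m)]
      rw [← outer_kron, ← proj_eq_outer]
    rw [hsimp]
    refine ⟨Fintype.card (A × B), fun i => p ((Fintype.equivFin (A × B)).symm i).1
        ((Fintype.equivFin (A × B)).symm i).2,
      fun i => proj (tensorVec (a ((Fintype.equivFin (A × B)).symm i).1)
        (b ((Fintype.equivFin (A × B)).symm i).2)),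
      fun i => proj (tensorVec (a ((Fintype.equivFin (A × B)).symm i).1)
        (b ((Fintype.equivFin (A × B)).symm i).2)),
      fun i => hp _ _, ?_, fun i => isDensityMatrix_proj (onfam_unitVec hu _),
      fun i => isDensityMatrix_proj (onfam_unitVec hu _), ?_⟩
    · rw [Equiv.sum_comp (Fintype.equivFin (A × B)).symm (fun m : A × B => p m.1 m.2),
        Fintype.sum_prod_type]
      exact hpsum
    · exact (Equiv.sum_comp (Fintype.equivFin (A × B)).symm
        (fun m : A × B => ((p m.1 m.2 : ℝ) : ℂ) •
          (proj (tensorVec (a m.1) (b m.2)) ⊗ₖ proj (tensorVec (a m.1) (b m.2))))).symm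
  · rintro ⟨UA, UB, refA, refB, hrefA, hrefB, hUA, hUB, hsep⟩
    obtain ⟨hUAu, eA, fA, heA, hfA, hcopyA⟩ := hUA
    obtain ⟨hUBu, eB, fB, heB, hfB, hcopyB⟩ := hUB
    obtain ⟨N, q, σS, σM, hq0, hq1, hσS, hσM, hsepEq⟩ := hsep
    have hu : OrthonormalFam (fun m : A × B => tensorVec (eA m.1) (eB m.2)) :=
      onfam_tensor heA heB
    have hw : OrthonormalFam (fun m : A × B => tensorVec (fA m.1) (fB m.2)) :=
      onfam_tensor hfA hfB
    have hact := activated_eq UA UB refA refB eA fA eB fB heA heB hcopyA hcopyB ρ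
    rw [hsepEq] at hact
    obtain ⟨hoff, hdiag⟩ := sep_core hu hw
      (r := fun m m' => qf (tensorVec (eA m.1) (eB m.2)) (tensorVec (eA m'.1) (eB m'.2)) ρ)
      hact hq0 hσS hσM rfl
    refine ⟨eA, eB,
      fun k j => (qf (tensorVec (eA k) (eB j)) (tensorVec (eA k) (eB j)) ρ).re,
      heA, heB, ?_, ?_, ?_⟩
    · intro k j
      exact (Complex.nonneg_iff.mp (hdiag (k, j))).1
    · have htr : ∑ m : A × B,
          qf (tensorVec (eA m.1) (eB m.2)) (tensorVec (eA m.1) (eB m.2)) ρ = 1 := by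
        rw [sum_qf_diag hu ρ, hρ.2]
      have h1 : (∑ k, ∑ j, (qf (tensorVec (eA k) (eB j)) (tensorVec (eA k) (eB j)) ρ).re)
          = ∑ m : A × B,
              (qf (tensorVec (eA m.1) (eB m.2)) (tensorVec (eA m.1) (eB m.2)) ρ).re :=
        (Fintype.sum_prod_type' _).symm
      rw [h1, ← Complex.re_sum, htr, Complex.one_re]
    · have hcollapse : ∀ m : A × B, (∑ m' : A × B,
          qf (tensorVec (eA m.1) (eB m.2)) (tensorVec (eA m'.1) (eB m'.2)) ρ •
            outer (tensorVec (eA m.1) (eB m.2)) (tensorVec (eA m'.1) (eB m'.2)))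
          = ((qf (tensorVec (eA m.1) (eB m.2)) (tensorVec (eA m.1) (eB m.2)) ρ).re : ℂ) •
              proj (tensorVec (eA m.1) (eB m.2)) := by
        intro m
        rw [Finset.sum_eq_single m]
        · have h0 := hdiag m
          rw [Complex.nonneg_iff] at h0
          have hc : ((qf (tensorVec (eA m.1) (eB m.2)) (tensorVec (eA m.1) (eB m.2)) ρ).re : ℂ)
              = qf (tensorVec (eA m.1) (eB m.2)) (tensorVec (eA m.1) (eB m.2)) ρ :=
            Complex.ext (by simp) (by simpa using h0.2)
          rw [hc, proj_eq_outer]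
        · intro m' _ hne
          rw [show qf (tensorVec (eA m.1) (eB m.2)) (tensorVec (eA m'.1) (eB m'.2)) ρ = 0 from
            hoff m m' (fun hc => hne hc.symm), zero_smul]
        · intro hmem
          exact absurd (Finset.mem_univ m) hmem
      conv_lhs => rw [matrix_expansion hu ρ]
      refine Eq.trans (Finset.sum_congr rfl fun m _ => hcollapse m) ?_
      exact Fintype.sum_prod_type' (fun k j =>
        ((qf (tensorVec (eA k) (eB j)) (tensorVec (eA k) (eB j)) ρ).re : ℂ) •
          proj (tensorVec (eA k) (eB j)))

end QI
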